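/- Let r : [0,1] → ℝ be continuously differentiable, let n ≥ 2 be an integer and let a ∈ [0, 1 − 1/n]. Then there exists ξ ∈ [a, a + 1/n] such that ∫_0^1 ( r(a + z/n) − r(a) ) sin(2πz) dz = − (1/(2πn)) r′(ξ). In particular this integral equals ∫_0^{1/2} ( r(a + z/n) − r(a + z/n + 1/(2n)) ) sin(2πz) dz. -/

import Mathlib

open MeasureTheory Real

/-- For `r` of class `C¹` on `[0,1]`, `n ≥ 2` and `a ∈ [0, 1 − 1/n]`, there is
`ξ ∈ [a, a + 1/n]` with `∫_0^1 (r(a + z/n) − r(a)) sin(2πz) dz = −r'(ξ)/(2πn)`; moreover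
this integral equals `∫_0^{1/2} (r(a + z/n) − r(a + z/n + 1/(2n))) sin(2πz) dz`. -/
theorem mean_value_oscillatory
    (r r' : ℝ → ℝ)
    (hr : ∀ u ∈ Set.Icc (0:ℝ) 1, HasDerivWithinAt r (r' u) (Set.Icc 0 1) u)
    (hr' : ContinuousOn r' (Set.Icc 0 1))
    (n : ℕ) (hn : 2 ≤ n) (a : ℝ) (ha : a ∈ Set.Icc (0:ℝ) (1 - 1 / n)) :
    (∃ ξ ∈ Set.Icc a (a + 1 / n),
      (∫ z in (0:ℝ)..1, (r (a + z / n) - r a) * Real.sin (2 * π * z)) =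
        -(1 / (2 * π * n)) * r' ξ) ∧
    (∫ z in (0:ℝ)..1, (r (a + z / n) - r a) * Real.sin (2 * π * z)) =
      ∫ z in (0:ℝ)..(1/2 : ℝ),
        (r (a + z / n) - r (a + z / n + 1 / (2 * n))) * Real.sin (2 * π * z) := by
  obtain ⟨ha0, ha1⟩ := ha
  have hnR : (2:ℝ) ≤ (n:ℝ) := by exact_mod_cast hn
  have hn0 : (0:ℝ) < (n:ℝ) := by linarith
  have hπ : (0:ℝ) < π := Real.pi_pos
  have hrc : ContinuousOn r (Set.Icc 0 1) := fun u hu => (hr u hu).continuousWithinAt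
  have ha1' : a + 1 / (n:ℝ) ≤ 1 := by linarith
  have hhalf : (1/2:ℝ) / (n:ℝ) + 1/(2*n) = 1/n := by
    rw [div_div, ← add_div,
      div_eq_div_iff (by positivity : (2*(n:ℝ)) ≠ 0) hn0.ne']
    ring
  -- membership facts
  have hmem : ∀ z ∈ Set.Icc (0:ℝ) 1, a + z / n ∈ Set.Icc (0:ℝ) 1 := by
    intro z hz
    have h1 : z / (n:ℝ) ≤ 1 / n := by gcongr; exact hz.2
    have h2 : 0 ≤ z / (n:ℝ) := div_nonneg hz.1 hn0.le
    exact ⟨by linarith, by linarith⟩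
  have hmem2 : ∀ z ∈ Set.Icc (0:ℝ) (1/2), a + z / n + 1 / (2*n) ∈ Set.Icc (0:ℝ) 1 := by
    intro z hz
    have h1 : z / (n:ℝ) ≤ (1/2) / n := by gcongr; exact hz.2
    have h2 : 0 ≤ z / (n:ℝ) := div_nonneg hz.1 hn0.le
    have h4 : (0:ℝ) < 1/(2*(n:ℝ)) := by positivity
    exact ⟨by linarith, by linarith⟩
  -- continuity of pieces
  have hca : Continuous fun z : ℝ => a + z / n :=
    continuous_const.add (continuous_id.div_const _)
  have hc1 : ContinuousOn (fun z => r (a + z / n)) (Set.Icc (0:ℝ) 1) :=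
    hrc.comp hca.continuousOn hmem
  have hc2 : ContinuousOn (fun z => r (a + z / n + 1/(2*n))) (Set.Icc (0:ℝ) (1/2)) :=
    hrc.comp (hca.add continuous_const).continuousOn hmem2
  have hcsin : Continuous fun z : ℝ => Real.sin (2 * π * z) :=
    Real.continuous_sin.comp (continuous_const.mul continuous_id)
  set F : ℝ → ℝ := fun z => (r (a + z / n) - r a) * Real.sin (2 * π * z) with hF
  have hFc : ContinuousOn F (Set.Icc (0:ℝ) 1) :=
    ((hc1.sub continuousOn_const).mul hcsin.continuousOn)
  have hFi1 : IntervalIntegrable F volume 0 (1/2) :=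
    (hFc.mono (Set.Icc_subset_Icc le_rfl (by norm_num))).intervalIntegrable_of_Icc
      (by norm_num)
  have hFi2 : IntervalIntegrable F volume (1/2) 1 :=
    (hFc.mono (Set.Icc_subset_Icc (by norm_num) le_rfl)).intervalIntegrable_of_Icc
      (by norm_num)
  have hFsi : IntervalIntegrable (fun z => F (z + 1/2)) volume 0 (1/2) := by
    have hcont : ContinuousOn (fun z : ℝ => F (z + 1/2)) (Set.Icc (0:ℝ) (1/2)) := by
      apply hFc.comp (continuous_add_right (1/2:ℝ)).continuousOn
      intro z hz
      simp only [Set.mem_Icc] at hz ⊢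
      constructor <;> linarith [hz.1, hz.2]
    exact hcont.intervalIntegrable_of_Icc (by norm_num)
  -- Part 2: the folding identity
  have key2 : (∫ z in (0:ℝ)..1, F z) =
      ∫ z in (0:ℝ)..(1/2:ℝ),
        (r (a + z / n) - r (a + z / n + 1 / (2 * n))) * Real.sin (2 * π * z) := by
    have hsplit : (∫ z in (0:ℝ)..1, F z) =
        (∫ z in (0:ℝ)..(1/2:ℝ), F z) + ∫ z in (1/2:ℝ)..1, F z :=
      (intervalIntegral.integral_add_adjacent_intervals hFi1 hFi2).symm
    have hshift : (∫ z in (1/2:ℝ)..1, F z) = ∫ z in (0:ℝ)..(1/2:ℝ), F (z + 1/2) := by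
      rw [intervalIntegral.integral_comp_add_right F (1/2)]
      norm_num
    rw [hsplit, hshift, ← intervalIntegral.integral_add hFi1 hFsi]
    apply intervalIntegral.integral_congr
    intro z _
    have harg : a + (z + 1/2) / n = a + z / n + 1 / (2 * (n:ℝ)) := by
      rw [add_div, div_div, ← add_assoc]
    have hsin2 : Real.sin (2 * π * (z + 1/2)) = -Real.sin (2 * π * z) := by
      have h : 2 * π * (z + 1/2) = 2 * π * z + π := by ring
      rw [h, Real.sin_add_pi]
    simp only [hF, harg, hsin2]
    ring
  refine ⟨?_, key2⟩
  -- Part 1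
  rw [key2]
  set G : ℝ → ℝ := fun z =>
    (r (a + z / n) - r (a + z / n + 1 / (2 * n))) * Real.sin (2 * π * z) with hG
  have hJsub : Set.Icc a (a + 1/(n:ℝ)) ⊆ Set.Icc (0:ℝ) 1 :=
    Set.Icc_subset_Icc ha0 ha1'
  have hJne : (Set.Icc a (a + 1/(n:ℝ))).Nonempty := by
    refine ⟨a, Set.left_mem_Icc.mpr ?_⟩
    have : (0:ℝ) < 1/(n:ℝ) := by positivity
    linarith
  obtain ⟨ξM, hξM, hMax⟩ := isCompact_Icc.exists_isMaxOn hJne (hr'.mono hJsub)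
  obtain ⟨ξm, hξm, hMin⟩ := isCompact_Icc.exists_isMinOn hJne (hr'.mono hJsub)
  set M := r' ξM with hMdef
  set m := r' ξm with hmdef
  -- MVT pointwise
  have hMVT : ∀ z ∈ Set.Icc (0:ℝ) (1/2), ∃ c ∈ Set.Icc a (a + 1/(n:ℝ)),
      r (a + z / n) - r (a + z / n + 1 / (2 * n)) = -(1/(2*(n:ℝ))) * r' c := by
    intro z hz
    have hδ : (0:ℝ) < 1/(2*(n:ℝ)) := by positivity
    have hz0 : 0 ≤ z / (n:ℝ) := div_nonneg hz.1 hn0.le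
    have hz1 : z / (n:ℝ) ≤ (1/2) / n := by gcongr; exact hz.2
    have hx0 : 0 ≤ a + z / (n:ℝ) := by linarith
    have hx1 : a + z / (n:ℝ) + 1/(2*(n:ℝ)) ≤ 1 := by linarith
    have hlt : a + z / (n:ℝ) < a + z / (n:ℝ) + 1/(2*(n:ℝ)) := by linarith
    obtain ⟨c, hc, hslope⟩ := exists_hasDerivAt_eq_slope r r' hlt
      (hrc.mono (Set.Icc_subset_Icc hx0 hx1))
      (fun c hc => (hr c ⟨by linarith [hc.1], by linarith [hc.2]⟩).hasDerivAt
        (Icc_mem_nhds (by linarith [hc.1]) (by linarith [hc.2])))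
    refine ⟨c, ⟨by linarith [hc.1], by linarith [hc.2]⟩, ?_⟩
    rw [hslope]
    have heq : a + z / (n:ℝ) + 1/(2*(n:ℝ)) - (a + z / (n:ℝ)) = 1/(2*(n:ℝ)) := by ring
    rw [heq]
    field_simp
    ring
  -- bounds on the integrand
  have hsinpos : ∀ z ∈ Set.Icc (0:ℝ) (1/2), 0 ≤ Real.sin (2 * π * z) := by
    intro z hz
    apply Real.sin_nonneg_of_nonneg_of_le_pi
    · have := hz.1; positivity
    · nlinarith [hz.2]
  have hGc : ContinuousOn G (Set.Icc (0:ℝ) (1/2)) :=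
    (((hc1.mono (Set.Icc_subset_Icc le_rfl (by norm_num))).sub hc2).mul hcsin.continuousOn)
  have hGi : IntervalIntegrable G volume 0 (1/2) :=
    hGc.intervalIntegrable_of_Icc (by norm_num)
  have hLi : ∀ C : ℝ, IntervalIntegrable (fun z => C * Real.sin (2*π*z)) volume 0 (1/2) :=
    fun C => (continuous_const.mul hcsin).intervalIntegrable 0 (1/2)
  have hlow : ∀ z ∈ Set.Icc (0:ℝ) (1/2),
      (-(1/(2*(n:ℝ))) * M) * Real.sin (2*π*z) ≤ G z := by
    intro z hz
    obtain ⟨c, hc, hceq⟩ := hMVT z hz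
    have h1 : r' c ≤ M := hMax hc
    simp only [hG, hceq]
    have h5 : -(1/(2*(n:ℝ))) * M ≤ -(1/(2*(n:ℝ))) * r' c := by
      apply mul_le_mul_of_nonpos_left h1
      have : (0:ℝ) < 1/(2*(n:ℝ)) := by positivity
      linarith
    exact mul_le_mul_of_nonneg_right h5 (hsinpos z hz)
  have hhigh : ∀ z ∈ Set.Icc (0:ℝ) (1/2),
      G z ≤ (-(1/(2*(n:ℝ))) * m) * Real.sin (2*π*z) := by
    intro z hz
    obtain ⟨c, hc, hceq⟩ := hMVT z hz
    have h1 : m ≤ r' c := hMin hc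
    simp only [hG, hceq]
    have h5 : -(1/(2*(n:ℝ))) * r' c ≤ -(1/(2*(n:ℝ))) * m := by
      apply mul_le_mul_of_nonpos_left h1
      have : (0:ℝ) < 1/(2*(n:ℝ)) := by positivity
      linarith
    exact mul_le_mul_of_nonneg_right h5 (hsinpos z hz)
  -- the sine integral
  have hsinint : (∫ z in (0:ℝ)..(1/2:ℝ), Real.sin (2*π*z)) = 1/π := by
    rw [intervalIntegral.integral_comp_mul_left Real.sin
      (ne_of_gt (by positivity : (0:ℝ) < 2*π))]
    have h12 : 2*π*(1/2:ℝ) = π := by ring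
    rw [integral_sin, mul_zero, h12, Real.cos_zero, Real.cos_pi]
    rw [smul_eq_mul]
    rw [show (1:ℝ) - (-1) = 2 by norm_num]
    rw [eq_div_iff hπ.ne']
    field_simp
  set I := ∫ z in (0:ℝ)..(1/2:ℝ), G z with hI
  have hIlow : -(1/(2*(n:ℝ))) * M * (1/π) ≤ I := by
    have h := intervalIntegral.integral_mono_on (by norm_num : (0:ℝ) ≤ 1/2)
      (hLi _) hGi hlow
    rwa [intervalIntegral.integral_const_mul, hsinint] at h
  have hIhigh : I ≤ -(1/(2*(n:ℝ))) * m * (1/π) := by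
    have h := intervalIntegral.integral_mono_on (by norm_num : (0:ℝ) ≤ 1/2)
      hGi (hLi _) hhigh
    rwa [intervalIntegral.integral_const_mul, hsinint] at h
  -- intermediate value
  set v : ℝ := -(2*π*n) * I with hv
  have hmv : m ≤ v := by
    have h2 : (0:ℝ) < 2*π*(n:ℝ) := by positivity
    have h3 := mul_le_mul_of_nonneg_left hIhigh h2.le
    have h4 : (2*π*(n:ℝ)) * (-(1/(2*(n:ℝ))) * m * (1/π)) = -m := by
      field_simp
    rw [h4] at h3
    simp only [hv]; linarith
  have hvM : v ≤ M := by
    have h2 : (0:ℝ) < 2*π*(n:ℝ) := by positivity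
    have h3 := mul_le_mul_of_nonneg_left hIlow h2.le
    have h4 : (2*π*(n:ℝ)) * (-(1/(2*(n:ℝ))) * M * (1/π)) = -M := by
      field_simp
    rw [h4] at h3
    simp only [hv]; linarith
  have hsub2 : Set.uIcc ξm ξM ⊆ Set.Icc a (a + 1/(n:ℝ)) :=
    Set.uIcc_subset_Icc hξm hξM
  have hIVT := intermediate_value_uIcc ((hr'.mono hJsub).mono hsub2)
  have hvmem : v ∈ Set.uIcc (r' ξm) (r' ξM) := by
    rw [Set.uIcc_of_le (hMin hξM)]
    exact ⟨hmv, hvM⟩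
  obtain ⟨ξ, hξ, hξv⟩ := hIVT hvmem
  refine ⟨ξ, hsub2 hξ, ?_⟩
  rw [hξv]
  simp only [hv, hI]
  have h2 : (2*π*(n:ℝ)) ≠ 0 := by positivity
  field_simp
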